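/- Fix T > 0, n ∈ ℕ, α, β ∈ ℝ, and let W: [0,T] → M_n(ℝ) be a differentiable family of symmetric matrices satisfying dW(t)/dt ⪰ W(t)² + α·W(t) + β·Id_n for all t ∈ [0,T]. Fix a unit vector θ ∈ ℝ^n, set φ(t) = ⟨W(t)θ, θ⟩ and c = φ(0), and set λ = β − α²/4. Define ξ_λ(t) = √λ · tan(√λ·t + c_1) if λ > 0, ξ_λ(t) = −1/(t + c_2) if λ = 0, and ξ_λ(t) = −√(−λ) · tanh(√(−λ)·t + c_3) if λ < 0, where c_1 = arctan( (c + α/2)/√λ ), c_2 = −2/(2c + α) (assuming 2c + α ≠ 0 in the case λ = 0), and c_3 = arctanh( −(c + α/2)/√(−λ) ) (assuming |c + α/2| < √(−λ) in the case λ < 0). Then φ(t) ≥ ξ_λ(t) − α/2 for every t ∈ [0,T] at which ξ_λ is defined and finite (i.e., √λ·t + c_1 ∈ (−π/2, π/2) when λ > 0, and t + c_2 ≠ 0 when λ = 0). -/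

import Mathlib

open MeasureTheory

/-- The inverse hyperbolic tangent `arctanh x = (1/2) log((1+x)/(1−x))`. -/
noncomputable def arctanh (x : ℝ) : ℝ := Real.log ((1 + x) / (1 - x)) / 2

lemma tanh_hasDerivAt (x : ℝ) : HasDerivAt Real.tanh (1 - Real.tanh x ^ 2) x := by
  have hc : Real.cosh x ≠ 0 := (Real.cosh_pos x).ne'
  have h : HasDerivAt (fun y => Real.sinh y / Real.cosh y)
      ((Real.cosh x * Real.cosh x - Real.sinh x * Real.sinh x) / Real.cosh x ^ 2) x :=
    (Real.hasDerivAt_sinh x).div (Real.hasDerivAt_cosh x) hc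
  have heq : (fun y => Real.sinh y / Real.cosh y) = Real.tanh := by
    funext y; rw [Real.tanh_eq_sinh_div_cosh]
  rw [heq] at h
  convert h using 1
  have h2 : Real.cosh x ^ 2 - Real.sinh x ^ 2 = 1 := Real.cosh_sq_sub_sinh_sq x
  rw [Real.tanh_eq_sinh_div_cosh]
  field_simp

lemma tanh_arctanh' {y : ℝ} (h : |y| < 1) : Real.tanh (arctanh y) = y := by
  have h1 : -1 < y := (abs_lt.mp h).1
  have h2 : y < 1 := (abs_lt.mp h).2
  have hr : 0 < (1 + y) / (1 - y) := div_pos (by linarith) (by linarith)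
  set x := arctanh y with hxdef
  have hx : Real.exp x * Real.exp x = (1 + y) / (1 - y) := by
    rw [← Real.exp_add, hxdef, arctanh,
      show Real.log ((1 + y) / (1 - y)) / 2 + Real.log ((1 + y) / (1 - y)) / 2
        = Real.log ((1 + y) / (1 - y)) by ring, Real.exp_log hr]
  have hex : (0:ℝ) < Real.exp x := Real.exp_pos x
  rw [Real.tanh_eq_sinh_div_cosh, Real.sinh_eq, Real.cosh_eq, Real.exp_neg]
  rw [div_eq_iff (by positivity)]
  have h1y : (1:ℝ) - y > 0 := by linarith
  have hx2 : Real.exp x * Real.exp x * (1 - y) = 1 + y := by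
    rw [hx]; field_simp
  field_simp
  nlinarith [hx2, hex]

/-- One-sided Gronwall-type comparison: if `u' ≥ g·u`, `g ≤ K`, `u a = 0` then `u b ≥ 0`. -/
lemma comp_aux {a b K : ℝ} (hab : a ≤ b) {u u' g : ℝ → ℝ}
    (hderiv : ∀ s ∈ Set.Icc a b, HasDerivAt u (u' s) s)
    (hineq : ∀ s ∈ Set.Icc a b, g s * u s ≤ u' s)
    (hK : ∀ s ∈ Set.Icc a b, g s ≤ K)
    (h0 : u a = 0) : 0 ≤ u b := by
  by_contra hub
  push_neg at hub
  have hcont : ContinuousOn u (Set.Icc a b) := fun s hs =>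
    (hderiv s hs).continuousAt.continuousWithinAt
  set S : Set ℝ := Set.Icc a b ∩ u ⁻¹' {0} with hS
  have hSne : S.Nonempty := ⟨a, ⟨Set.left_mem_Icc.2 hab, h0⟩⟩
  have hSbdd : BddAbove S := ⟨b, fun x hx => hx.1.2⟩
  have hSclosed : IsClosed S :=
    hcont.preimage_isClosed_of_isClosed isClosed_Icc isClosed_singleton
  have hcS : sSup S ∈ S := hSclosed.csSup_mem hSne hSbdd
  set c := sSup S with hcdef
  have hc0 : u c = 0 := hcS.2
  have hcIcc : c ∈ Set.Icc a b := hcS.1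
  have hcb : c ≤ b := hcIcc.2
  have hneg : ∀ s ∈ Set.Icc c b, u s ≤ 0 := by
    intro s hs
    by_contra hpos
    push_neg at hpos
    have hsb : s ≤ b := hs.2
    have hsIcc : Set.Icc s b ⊆ Set.Icc a b :=
      Set.Icc_subset_Icc (le_trans hcIcc.1 hs.1) le_rfl
    have hmem : (0:ℝ) ∈ Set.Icc (u b) (u s) := ⟨hub.le, hpos.le⟩
    obtain ⟨z, hz, huz⟩ := intermediate_value_Icc' hsb (hcont.mono hsIcc) hmem
    have hzc : z ≤ c := le_csSup hSbdd ⟨hsIcc hz, huz⟩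
    have hcs : c < s := lt_of_le_of_ne hs.1 (by
      intro he; rw [← he] at hpos; rw [hc0] at hpos; exact lt_irrefl 0 hpos)
    linarith [hz.1]
  -- integrating factor
  have hvd : ∀ x ∈ Set.Icc a b, HasDerivAt (fun s => u s * Real.exp (-K * s))
      (u' x * Real.exp (-K * x) + u x * (Real.exp (-K * x) * (-K))) x := by
    intro x hxab
    have hed : HasDerivAt (fun s => Real.exp (-K * s)) (Real.exp (-K * x) * (-K)) x := by
      simpa using ((hasDerivAt_id x).const_mul (-K)).exp
    exact (hderiv x hxab).mul hed
  have hvmono : MonotoneOn (fun s => u s * Real.exp (-K * s)) (Set.Icc c b) := by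
    apply monotoneOn_of_deriv_nonneg (convex_Icc c b)
    · exact ((hcont.mono (Set.Icc_subset_Icc hcIcc.1 le_rfl)).mul
        (Continuous.continuousOn (by continuity)))
    · intro x hx
      rw [interior_Icc] at hx
      have hxab : x ∈ Set.Icc a b := ⟨le_trans hcIcc.1 hx.1.le, hx.2.le⟩
      exact (hvd x hxab).differentiableAt.differentiableWithinAt
    · intro x hx
      rw [interior_Icc] at hx
      have hxab : x ∈ Set.Icc a b := ⟨le_trans hcIcc.1 hx.1.le, hx.2.le⟩
      rw [(hvd x hxab).deriv]
      have hu0 : u x ≤ 0 := hneg x ⟨hx.1.le, hx.2.le⟩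
      have hKu : K * u x ≤ g x * u x := mul_le_mul_of_nonpos_right (hK x hxab) hu0
      have h1 : K * u x ≤ u' x := le_trans hKu (hineq x hxab)
      have he : (0:ℝ) < Real.exp (-K * x) := Real.exp_pos _
      nlinarith [h1, he]
  have hmle := hvmono (Set.left_mem_Icc.2 hcb) (Set.right_mem_Icc.2 hcb) hcb
  simp only [hc0, zero_mul] at hmle
  nlinarith [Real.exp_pos (-K * b), hmle, hub]

/-- Riccati comparison: a supersolution dominates the exact solution. -/
lemma compB {T t lam : ℝ} (ht : t ∈ Set.Icc (0:ℝ) T) {ψ ψ' ξ : ℝ → ℝ}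
    (hψ : ∀ s ∈ Set.Icc (0:ℝ) T, HasDerivAt ψ (ψ' s) s)
    (hψ' : ∀ s ∈ Set.Icc (0:ℝ) T, ψ s ^ 2 + lam ≤ ψ' s)
    (hξ : ∀ s ∈ Set.Icc (0:ℝ) t, HasDerivAt ξ (ξ s ^ 2 + lam) s)
    (h0 : ξ 0 = ψ 0) : ξ t ≤ ψ t := by
  have ht0 : (0:ℝ) ≤ t := ht.1
  have hsub : Set.Icc (0:ℝ) t ⊆ Set.Icc 0 T := Set.Icc_subset_Icc le_rfl ht.2
  have hgcont : ContinuousOn (fun s => ψ s + ξ s) (Set.Icc 0 t) := fun s hs =>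
    ((hψ s (hsub hs)).continuousAt.add (hξ s hs).continuousAt).continuousWithinAt
  obtain ⟨K, hK⟩ := isCompact_Icc.exists_bound_of_continuousOn hgcont
  have hmain := comp_aux (a := 0) (b := t) ht0 (u := fun s => ψ s - ξ s)
    (u' := fun s => ψ' s - (ξ s ^ 2 + lam)) (g := fun s => ψ s + ξ s) (K := K)
    (fun s hs => (hψ s (hsub hs)).sub (hξ s hs))
    (fun s hs => by
      show (ψ s + ξ s) * (ψ s - ξ s) ≤ ψ' s - (ξ s ^ 2 + lam)
      nlinarith [hψ' s (hsub hs)])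
    (fun s hs => le_trans (le_abs_self _) (by
      simpa [Real.norm_eq_abs] using hK s hs))
    (by simp [h0])
  simpa using hmain

theorem stmt_13 {n : ℕ} (T : ℝ) (hT : 0 < T) (α β : ℝ)
    (W W' : ℝ → Matrix (Fin n) (Fin n) ℝ)
    (hWsymm : ∀ t ∈ Set.Icc 0 T, (W t).IsSymm)
    (hWderiv : ∀ t ∈ Set.Icc 0 T, ∀ i j, HasDerivAt (fun s => W s i j) (W' t i j) t)
    (hODI : ∀ t ∈ Set.Icc 0 T,
      (W' t - (W t * W t + α • W t + β • (1 : Matrix (Fin n) (Fin n) ℝ))).PosSemidef)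
    (θ : Fin n → ℝ) (hθ : (∑ i, θ i ^ 2) = 1) :
    ∀ t ∈ Set.Icc 0 T,
      ((0 < β - α ^ 2 / 4 →
        Real.sqrt (β - α ^ 2 / 4) * t +
            Real.arctan ((dotProduct θ ((W 0).mulVec θ) + α / 2) /
              Real.sqrt (β - α ^ 2 / 4)) ∈ Set.Ioo (-(Real.pi / 2)) (Real.pi / 2) →
        Real.sqrt (β - α ^ 2 / 4) *
            Real.tan (Real.sqrt (β - α ^ 2 / 4) * t +
              Real.arctan ((dotProduct θ ((W 0).mulVec θ) + α / 2) /
                Real.sqrt (β - α ^ 2 / 4))) - α / 2 ≤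
          dotProduct θ ((W t).mulVec θ)) ∧
      (β - α ^ 2 / 4 = 0 →
        2 * dotProduct θ ((W 0).mulVec θ) + α ≠ 0 →
        t + (-2 / (2 * dotProduct θ ((W 0).mulVec θ) + α)) ≠ 0 →
        -(1 / (t + (-2 / (2 * dotProduct θ ((W 0).mulVec θ) + α)))) - α / 2 ≤
          dotProduct θ ((W t).mulVec θ)) ∧
      (β - α ^ 2 / 4 < 0 →
        |dotProduct θ ((W 0).mulVec θ) + α / 2| < Real.sqrt (-(β - α ^ 2 / 4)) →
        -(Real.sqrt (-(β - α ^ 2 / 4)) *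
            Real.tanh (Real.sqrt (-(β - α ^ 2 / 4)) * t +
              arctanh (-(dotProduct θ ((W 0).mulVec θ) + α / 2) /
                Real.sqrt (-(β - α ^ 2 / 4))))) - α / 2 ≤
          dotProduct θ ((W t).mulVec θ))) := by
  intro t ht
  -- φ and its derivative
  have hφd : ∀ s ∈ Set.Icc (0:ℝ) T, HasDerivAt (fun r => dotProduct θ ((W r).mulVec θ))
      (dotProduct θ ((W' s).mulVec θ)) s := by
    intro s hs
    have h : HasDerivAt (fun r => ∑ i, θ i * ∑ j, W r i j * θ j)
        (∑ i, θ i * ∑ j, W' s i j * θ j) s := by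
      apply HasDerivAt.fun_sum
      intro i _
      exact (HasDerivAt.fun_sum (fun j _ => (hWderiv s hs i j).mul_const (θ j))).const_mul (θ i)
    simpa [dotProduct, Matrix.mulVec] using h
  have hθθ : dotProduct θ θ = 1 := by
    rw [dotProduct]
    rw [← hθ]
    exact Finset.sum_congr rfl fun i _ => (sq (θ i)).symm
  -- Riccati inequality for φ
  have hRic : ∀ s ∈ Set.Icc (0:ℝ) T,
      (dotProduct θ ((W s).mulVec θ)) ^ 2 + α * dotProduct θ ((W s).mulVec θ) + β
        ≤ dotProduct θ ((W' s).mulVec θ) := by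
    intro s hs
    have hpsd := (hODI s hs).dotProduct_mulVec_nonneg θ
    have hsymm : (W s).transpose = W s := hWsymm s hs
    set y := (W s).mulVec θ with hy
    have hWW : dotProduct θ ((W s * W s).mulVec θ) = dotProduct y y := by
      rw [← Matrix.mulVec_mulVec, Matrix.dotProduct_mulVec]
      congr 1
      conv_lhs => rw [← hsymm]
      exact Matrix.vecMul_transpose _ _
    have hCS : (dotProduct θ y) ^ 2 ≤ dotProduct y y := by
      have h1 := Finset.sum_mul_sq_le_sq_mul_sq Finset.univ θ y
      rw [hθ, one_mul] at h1
      calc (dotProduct θ y) ^ 2 = (∑ i, θ i * y i) ^ 2 := rfl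
        _ ≤ ∑ i, y i ^ 2 := h1
        _ = dotProduct y y := Finset.sum_congr rfl fun i _ => sq (y i)
    simp only [Matrix.sub_mulVec, Matrix.add_mulVec, Matrix.smul_mulVec,
      Matrix.one_mulVec, dotProduct_sub, dotProduct_add,
      dotProduct_smul, smul_eq_mul, star_trivial, hθθ] at hpsd
    nlinarith [hWW, hCS, hpsd]
  set lam := β - α ^ 2 / 4 with hlam
  set c := dotProduct θ ((W 0).mulVec θ) with hc
  set ψ : ℝ → ℝ := fun s => dotProduct θ ((W s).mulVec θ) + α / 2 with hψdef
  have hψd : ∀ s ∈ Set.Icc (0:ℝ) T,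
      HasDerivAt ψ (dotProduct θ ((W' s).mulVec θ)) s := by
    intro s hs
    exact (hφd s hs).add_const (α / 2)
  have hψineq : ∀ s ∈ Set.Icc (0:ℝ) T,
      ψ s ^ 2 + lam ≤ dotProduct θ ((W' s).mulVec θ) := by
    intro s hs
    have := hRic s hs
    simp only [hψdef, hlam]
    nlinarith [this]
  have hψ0 : ψ 0 = c + α / 2 := rfl
  refine ⟨?_, ?_, ?_⟩
  · -- λ > 0
    intro hl hmem
    set r := Real.sqrt lam with hr
    have hr0 : 0 < r := Real.sqrt_pos.2 hl
    have hr2 : r ^ 2 = lam := Real.sq_sqrt hl.le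
    set c₁ := Real.arctan ((c + α / 2) / r) with hc₁
    have hc₁mem := Real.arctan_mem_Ioo ((c + α / 2) / r)
    set ξ : ℝ → ℝ := fun s => r * Real.tan (r * s + c₁) with hξdef
    have hξd : ∀ s ∈ Set.Icc (0:ℝ) t, HasDerivAt ξ (ξ s ^ 2 + lam) s := by
      intro s hs
      have hx1 : -(Real.pi / 2) < r * s + c₁ := by
        have : 0 ≤ r * s := mul_nonneg hr0.le hs.1
        linarith [hc₁mem.1]
      have hx2 : r * s + c₁ < Real.pi / 2 := by
        have : r * s ≤ r * t := mul_le_mul_of_nonneg_left hs.2 hr0.le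
        linarith [hmem.2]
      have hcos : Real.cos (r * s + c₁) ≠ 0 :=
        (Real.cos_pos_of_mem_Ioo ⟨hx1, hx2⟩).ne'
      have hin : HasDerivAt (fun z => r * z + c₁) r s := by
        simpa using ((hasDerivAt_id s).const_mul r).add_const c₁
      have htan := (Real.hasDerivAt_tan hcos).comp s hin
      have hfull := htan.const_mul r
      refine hfull.congr_deriv ?_
      symm
      have hid : 1 / Real.cos (r * s + c₁) ^ 2 = 1 + Real.tan (r * s + c₁) ^ 2 := by
        rw [← Real.inv_one_add_tan_sq hcos]
        rw [one_div, inv_inv]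
      simp only [hξdef]
      rw [hid]
      first
      | linear_combination -hr2
      | linear_combination hr2
    have h0 : ξ 0 = ψ 0 := by
      simp only [hξdef, hψ0, mul_zero, zero_add, hc₁, Real.tan_arctan]
      rw [mul_comm, div_mul_cancel₀ _ hr0.ne']
    have := compB ht hψd hψineq hξd h0
    simp only [hξdef, hψdef] at this
    linarith
  · -- λ = 0
    intro heq h1 h2
    set c₂ := -2 / (2 * c + α) with hc₂
    have hc₂0 : c₂ ≠ 0 := by
      simp only [hc₂]
      exact div_ne_zero (by norm_num) h1
    have hξ0 : -(1 / c₂) = c + α / 2 := by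
      rw [hc₂, one_div_div]
      ring
    have key : ∀ s₀ : ℝ, s₀ ∈ Set.Icc (0:ℝ) T → (∀ s ∈ Set.Icc (0:ℝ) s₀, s + c₂ ≠ 0) →
        -(1 / (s₀ + c₂)) ≤ ψ s₀ := by
      intro s₀ hs₀ hnz
      set ξ : ℝ → ℝ := fun s => -(1 / (s + c₂)) with hξdef
      have hξd : ∀ s ∈ Set.Icc (0:ℝ) s₀, HasDerivAt ξ (ξ s ^ 2 + lam) s := by
        intro s hs
        have hne := hnz s hs
        have hbase : HasDerivAt (fun z => z + c₂) 1 s := (hasDerivAt_id s).add_const c₂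
        have hinv := hbase.inv hne
        have hful := hinv.neg
        have hξeq : ξ = -(fun z => z + c₂)⁻¹ := by
          funext x
          simp [hξdef, one_div]
        nth_rewrite 1 [hξeq]
        refine hful.congr_deriv ?_
        symm
        · show (-(1 / (s + c₂))) ^ 2 + lam = -(-1 / (s + c₂) ^ 2)
          rw [heq, add_zero, neg_sq, div_pow, one_pow, neg_div, neg_neg]
      have h0 : ξ 0 = ψ 0 := by
        simp only [hξdef, hψ0, zero_add]
        exact hξ0
      exact compB hs₀ hψd hψineq hξd h0
    rcases lt_trichotomy c₂ 0 with hneg | hzero | hpos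
    · rcases lt_trichotomy (t + c₂) 0 with htneg | htzero | htpos
      · -- all of [0,t] has s + c₂ < 0
        have := key t ht (fun s hs => by
          have : s + c₂ ≤ t + c₂ := by linarith [hs.2]
          linarith)
        simp only [hψdef] at this
        linarith
      · exact absurd htzero h2
      · -- blow-up: contradiction
        exfalso
        have hcont : ContinuousOn ψ (Set.Icc 0 T) := fun s hs =>
          (hψd s hs).continuousAt.continuousWithinAt
        obtain ⟨M, hM⟩ := isCompact_Icc.exists_bound_of_continuousOn hcont
        have hM0 : 0 ≤ M := le_trans (norm_nonneg _) (hM 0 ⟨le_rfl, hT.le⟩)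
        set ε := min (-c₂) (1 / (M + 1)) with hε
        have hε0 : 0 < ε := lt_min (by linarith) (by positivity)
        set s₀ := -c₂ - ε with hs₀def
        have hs₀0 : 0 ≤ s₀ := by
          have : ε ≤ -c₂ := min_le_left _ _
          simp only [hs₀def]; linarith
        have hs₀t : s₀ < t := by
          simp only [hs₀def]; linarith
        have hs₀T : s₀ ∈ Set.Icc (0:ℝ) T := ⟨hs₀0, le_trans hs₀t.le ht.2⟩
        have hkey := key s₀ hs₀T (fun s hs => by
          have : s + c₂ ≤ s₀ + c₂ := by linarith [hs.2]
          have : s + c₂ ≤ -ε := by simp only [hs₀def] at this; linarith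
          linarith)
        have hval : -(1 / (s₀ + c₂)) = 1 / ε := by
          have : s₀ + c₂ = -ε := by simp only [hs₀def]; ring
          rw [this]
          field_simp
        have hεle : ε ≤ 1 / (M + 1) := min_le_right _ _
        have hbig : M + 1 ≤ 1 / ε := by
          rw [le_div_iff₀ hε0]
          calc (M + 1) * ε ≤ (M + 1) * (1 / (M + 1)) := by
                apply mul_le_mul_of_nonneg_left hεle (by linarith)
            _ = 1 := by field_simp
        have hψle : ψ s₀ ≤ M := le_trans (le_abs_self _) (hM s₀ hs₀T)
        rw [hval] at hkey
        exact absurd (le_trans hbig (le_trans hkey hψle)) (by linarith)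
    · exact absurd hzero hc₂0
    · -- c₂ > 0, all s + c₂ > 0
      have := key t ht (fun s hs => by
        have : 0 < s + c₂ := by linarith [hs.1]
        linarith)
      simp only [hψdef] at this
      linarith
  · -- λ < 0
    intro hl habs
    set μ := Real.sqrt (-lam) with hμ
    have hμ0 : 0 < μ := Real.sqrt_pos.2 (by linarith)
    have hμ2 : μ ^ 2 = -lam := Real.sq_sqrt (by linarith)
    set c₃ := arctanh (-(c + α / 2) / μ) with hc₃
    set ξ : ℝ → ℝ := fun s => -(μ * Real.tanh (μ * s + c₃)) with hξdef
    have hξd : ∀ s ∈ Set.Icc (0:ℝ) t, HasDerivAt ξ (ξ s ^ 2 + lam) s := by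
      intro s hs
      have hin : HasDerivAt (fun z => μ * z + c₃) μ s := by
        simpa using ((hasDerivAt_id s).const_mul μ).add_const c₃
      have htanh := (tanh_hasDerivAt (μ * s + c₃)).comp s hin
      have hfull := (htanh.const_mul μ).neg
      refine hfull.congr_deriv ?_
      symm
      simp only [hξdef]
      first
      | linear_combination hμ2
      | linear_combination -hμ2
    have h0 : ξ 0 = ψ 0 := by
      have habs' : |(-(c + α / 2) / μ)| < 1 := by
        rw [abs_div, abs_neg, abs_of_pos hμ0, div_lt_one hμ0]
        exact habs
      simp only [hξdef, hψ0, mul_zero, zero_add, hc₃, tanh_arctanh' habs']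
      rw [mul_comm, div_mul_cancel₀ _ hμ0.ne', neg_neg]
    have := compB ht hψd hψineq hξd h0
    simp only [hξdef, hψdef] at this
    linarith
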